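/- arXiv:2411.18397 — 2 statements merged into one kernel-verified Lean document; each statement's English description precedes it below -/
import Mathlib

section
/- Let φ : [0,∞) → ℝ be convex with continuous derivative φ', and let z₁, z₂ ≥ 0 be fixed. Then the map α ↦ B_{φ̃}(z₁, z₂; α) on (0,∞), where φ̃(·; α) is the Bregman generator with threshold α, is non-decreasing in α: for 0 < α₁ ≤ α₂ one has B_{φ̃}(z₁, z₂; α₁) ≤ B_{φ̃}(z₁, z₂; α₂). -/
/-- Tangent line inequality for a convex differentiable function on `[0, ∞)`. -/
lemma tangent_line_aux (φ φ' : ℝ → ℝ) (hconv : ConvexOn ℝ (Set.Ici 0) φ)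
    (hderiv : ∀ x ∈ Set.Ici (0:ℝ), HasDerivWithinAt φ (φ' x) (Set.Ici 0) x)
    {x y : ℝ} (hx : 0 ≤ x) (hy : 0 ≤ y) :
    φ x + φ' x * (y - x) ≤ φ y := by
  rcases lt_trichotomy x y with h | h | h
  · have h1 := hconv.le_slope_of_hasDerivWithinAt hx hy h (hderiv x hx)
    rw [slope_def_field] at h1
    have h2 := (le_div_iff₀ (by linarith : (0:ℝ) < y - x)).mp h1
    linarith
  · simp [h]
  · have h1 := hconv.slope_le_of_hasDerivWithinAt hy hx h (hderiv x hx)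
    rw [slope_def_field] at h1
    have h2 := (div_le_iff₀ (by linarith : (0:ℝ) < x - y)).mp h1
    nlinarith

/-- The derivative of a convex function on `[0, ∞)` is monotone. -/
lemma deriv_mono_aux (φ φ' : ℝ → ℝ) (hconv : ConvexOn ℝ (Set.Ici 0) φ)
    (hderiv : ∀ x ∈ Set.Ici (0:ℝ), HasDerivWithinAt φ (φ' x) (Set.Ici 0) x)
    {x y : ℝ} (hx : 0 ≤ x) (hy : 0 ≤ y) (hxy : x ≤ y) :
    φ' x ≤ φ' y := by
  have h1 := tangent_line_aux φ φ' hconv hderiv hx hy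
  have h2 := tangent_line_aux φ φ' hconv hderiv hy hx
  rcases eq_or_lt_of_le hxy with rfl | h
  · exact le_refl _
  · have key : φ' x * (y - x) ≤ φ' y * (y - x) := by nlinarith
    exact (mul_le_mul_iff_of_pos_right (by linarith)).mp key

/-- The Bregman divergence with generator `ψ` whose derivative is `ψ'`. -/
noncomputable def bregmanD (ψ ψ' : ℝ → ℝ) (z₁ z₂ : ℝ) : ℝ :=
  ψ z₁ - ψ z₂ - ψ' z₂ * (z₁ - z₂)

/-- The Bregman generator with threshold `α`, with derivative `x ↦ φ'(min(x,α))`. -/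
noncomputable def phiTilde (φ φ' : ℝ → ℝ) (α : ℝ) (x : ℝ) : ℝ :=
  if x ≤ α then φ x else φ α + φ' α * (x - α)

/-- For a convex, continuously differentiable generator `φ : [0,∞) → ℝ` and fixed
`z₁, z₂ ≥ 0`, the map `α ↦ B_{φ̃}(z₁, z₂; α)` is non-decreasing in the threshold `α`:
for `0 < α₁ ≤ α₂`, `B_{φ̃}(z₁, z₂; α₁) ≤ B_{φ̃}(z₁, z₂; α₂)`. -/
theorem bregman_phiTilde_mono_threshold
    (φ φ' : ℝ → ℝ) (hconv : ConvexOn ℝ (Set.Ici 0) φ)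
    (hderiv : ∀ x ∈ Set.Ici (0:ℝ), HasDerivWithinAt φ (φ' x) (Set.Ici 0) x)
    (hcont : ContinuousOn φ' (Set.Ici 0))
    (z₁ z₂ : ℝ) (hz₁ : 0 ≤ z₁) (hz₂ : 0 ≤ z₂) :
    ∀ α₁ α₂ : ℝ, 0 < α₁ → α₁ ≤ α₂ →
      bregmanD (phiTilde φ φ' α₁) (fun x => φ' (min x α₁)) z₁ z₂
        ≤ bregmanD (phiTilde φ φ' α₂) (fun x => φ' (min x α₂)) z₁ z₂ := by
  intro α₁ α₂ hα₁pos h12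
  have hα₁ : (0:ℝ) ≤ α₁ := hα₁pos.le
  have hα₂ : (0:ℝ) ≤ α₂ := hα₁.trans h12
  have T : ∀ x y : ℝ, 0 ≤ x → 0 ≤ y → φ x + φ' x * (y - x) ≤ φ y :=
    fun x y hx hy => tangent_line_aux φ φ' hconv hderiv hx hy
  have M : ∀ x y : ℝ, 0 ≤ x → 0 ≤ y → x ≤ y → φ' x ≤ φ' y :=
    fun x y hx hy hxy => deriv_mono_aux φ φ' hconv hderiv hx hy hxy
  simp only [bregmanD, phiTilde]
  rcases le_or_gt z₂ α₁ with h2a | h2a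
  · rw [if_pos h2a, if_pos (h2a.trans h12), min_eq_left h2a, min_eq_left (h2a.trans h12)]
    rcases le_or_gt z₁ α₁ with h1a | h1a
    · rw [if_pos h1a, if_pos (h1a.trans h12)]
    · rw [if_neg (not_le.mpr h1a)]
      rcases le_or_gt z₁ α₂ with h1b | h1b
      · rw [if_pos h1b]
        nlinarith [T α₁ z₁ hα₁ hz₁]
      · rw [if_neg (not_le.mpr h1b)]
        nlinarith [T α₁ α₂ hα₁ hα₂, M α₁ α₂ hα₁ hα₂ h12]
  · rw [if_neg (not_le.mpr h2a), min_eq_right h2a.le]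
    rcases le_or_gt z₂ α₂ with h2b | h2b
    · rw [if_pos h2b, min_eq_left h2b]
      rcases le_or_gt z₁ α₁ with h1a | h1a
      · rw [if_pos h1a, if_pos (h1a.trans h12)]
        nlinarith [T z₂ α₁ hz₂ hα₁, M α₁ z₂ hα₁ hz₂ h2a.le]
      · rw [if_neg (not_le.mpr h1a)]
        rcases le_or_gt z₁ α₂ with h1b | h1b
        · rw [if_pos h1b]
          nlinarith [T z₂ z₁ hz₂ hz₁]
        · rw [if_neg (not_le.mpr h1b)]
          nlinarith [T z₂ α₂ hz₂ hα₂, M z₂ α₂ hz₂ hα₂ h2b]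
    · rw [if_neg (not_le.mpr h2b), min_eq_right h2b.le]
      rcases le_or_gt z₁ α₁ with h1a | h1a
      · rw [if_pos h1a, if_pos (h1a.trans h12)]
        nlinarith [T α₂ α₁ hα₂ hα₁, M α₁ α₂ hα₁ hα₂ h12]
      · rw [if_neg (not_le.mpr h1a)]
        rcases le_or_gt z₁ α₂ with h1b | h1b
        · rw [if_pos h1b]
          nlinarith [T α₂ z₁ hα₂ hz₁]
        · rw [if_neg (not_le.mpr h1b)]
          nlinarith
end

section
/- Let φ : [0,∞) → ℝ be convex with continuous derivative φ', and let F̆₁, F̆₂ : (0,1) → [0,∞) be measurable with ∫₀¹ B_φ(F̆₁(t), F̆₂(t)) dt < ∞. Define 𝔅_{φ̃}(F̆₁, F̆₂; α) := ∫₀¹ B_{φ̃}(F̆₁(t), F̆₂(t); α) dt for α > 0, where φ̃(·; α) is the Bregman generator with threshold α. Then α ↦ 𝔅_{φ̃}(F̆₁, F̆₂; α) is non-decreasing on (0,∞), lim_{α→0⁺} 𝔅_{φ̃}(F̆₁, F̆₂; α) = 0, and lim_{α→∞} 𝔅_{φ̃}(F̆₁, F̆₂; α) = ∫₀¹ B_φ(F̆₁(t),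 F̆₂(t)) dt. -/
section Aux

open Set Filter MeasureTheory

variable {φ φ' : ℝ → ℝ}

/-- three-point identity -/
lemma bregman_threept (φ φ' : ℝ → ℝ) (z₁ z₂ a : ℝ) :
    bregmanD φ φ' z₁ z₂ =
      bregmanD φ φ' a z₂ + bregmanD φ φ' z₁ a + (φ' a - φ' z₂) * (z₁ - a) := by
  unfold bregmanD; ring

lemma bregman_nonneg (hgrad : ∀ a ∈ Ici (0:ℝ), ∀ b ∈ Ici (0:ℝ), φ a + φ' a * (b - a) ≤ φ b)
    {a b : ℝ} (ha : 0 ≤ a) (hb : 0 ≤ b) : 0 ≤ bregmanD φ φ' a b := by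
  have := hgrad b hb a ha
  unfold bregmanD; linarith

/-- monotone in the second argument above the first -/
lemma bregman_mono_right (hgrad : ∀ a ∈ Ici (0:ℝ), ∀ b ∈ Ici (0:ℝ), φ a + φ' a * (b - a) ≤ φ b)
    (hmono : MonotoneOn φ' (Ici (0:ℝ)))
    {z₁ a b : ℝ} (h0 : 0 ≤ z₁) (h1 : z₁ ≤ a) (h2 : a ≤ b) :
    bregmanD φ φ' z₁ a ≤ bregmanD φ φ' z₁ b := by
  have ha : (0:ℝ) ≤ a := le_trans h0 h1
  have hb : (0:ℝ) ≤ b := le_trans ha h2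
  have ht := bregman_threept φ φ' z₁ b a
  have h3 := bregman_nonneg hgrad ha hb
  have h4 : φ' a ≤ φ' b := hmono ha hb h2
  have h5 : 0 ≤ (φ' b - φ' a) * (a - z₁) := mul_nonneg (by linarith) (by linarith)
  have h6 : (φ' a - φ' b) * (z₁ - a) = (φ' b - φ' a) * (a - z₁) := by ring
  linarith

/-- antitone in the second argument below the first -/
lemma bregman_anti_right (hgrad : ∀ a ∈ Ici (0:ℝ), ∀ b ∈ Ici (0:ℝ), φ a + φ' a * (b - a) ≤ φ b)
    (hmono : MonotoneOn φ' (Ici (0:ℝ)))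
    {z₁ a b : ℝ} (h0 : 0 ≤ a) (h1 : a ≤ b) (h2 : b ≤ z₁) :
    bregmanD φ φ' z₁ b ≤ bregmanD φ φ' z₁ a := by
  have hb : (0:ℝ) ≤ b := le_trans h0 h1
  have ht := bregman_threept φ φ' z₁ a b
  have h3 := bregman_nonneg hgrad hb h0
  have h4 : φ' a ≤ φ' b := hmono h0 hb h1
  have h5 : (φ' b - φ' a) * (z₁ - b) ≥ 0 := mul_nonneg (by linarith) (by linarith)
  linarith

/-- closed formula for the thresholded Bregman divergence -/
lemma tilde_eq (φ φ' : ℝ → ℝ) (α z₁ z₂ : ℝ) :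
    bregmanD (phiTilde φ φ' α) (fun x => φ' (min x α)) z₁ z₂ =
      bregmanD φ φ' (min z₁ α) (min z₂ α)
        + (φ' α - φ' (min z₂ α)) * (z₁ - min z₁ α) := by
  simp only [bregmanD, phiTilde]
  rcases le_or_gt z₁ α with h1 | h1 <;> rcases le_or_gt z₂ α with h2 | h2
  · rw [if_pos h1, if_pos h2, min_eq_left h1, min_eq_left h2]; ring
  · rw [if_pos h1, if_neg (not_le.2 h2), min_eq_left h1, min_eq_right h2.le]; ring
  · rw [if_neg (not_le.2 h1), if_pos h2, min_eq_right h1.le, min_eq_left h2]; ring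
  · rw [if_neg (not_le.2 h1), if_neg (not_le.2 h2), min_eq_right h1.le, min_eq_right h2.le]; ring

lemma tilde_nonneg (hgrad : ∀ a ∈ Ici (0:ℝ), ∀ b ∈ Ici (0:ℝ), φ a + φ' a * (b - a) ≤ φ b)
    (hmono : MonotoneOn φ' (Ici (0:ℝ))) {α z₁ z₂ : ℝ}
    (hα : 0 ≤ α) (h₁ : 0 ≤ z₁) (h₂ : 0 ≤ z₂) :
    0 ≤ bregmanD (phiTilde φ φ' α) (fun x => φ' (min x α)) z₁ z₂ := by
  rw [tilde_eq]
  have m1 : (0:ℝ) ≤ min z₁ α := le_min h₁ hα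
  have m2 : (0:ℝ) ≤ min z₂ α := le_min h₂ hα
  have hB := bregman_nonneg hgrad m1 m2
  have h5 : 0 ≤ (φ' α - φ' (min z₂ α)) * (z₁ - min z₁ α) :=
    mul_nonneg (by have := hmono m2 hα (min_le_right z₂ α); linarith)
      (by have := min_le_left z₁ α; linarith)
  linarith

lemma tilde_le_top (hgrad : ∀ a ∈ Ici (0:ℝ), ∀ b ∈ Ici (0:ℝ), φ a + φ' a * (b - a) ≤ φ b)
    (hmono : MonotoneOn φ' (Ici (0:ℝ))) {α z₁ z₂ : ℝ}
    (hα : 0 ≤ α) (h₁ : 0 ≤ z₁) (h₂ : 0 ≤ z₂) :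
    bregmanD (phiTilde φ φ' α) (fun x => φ' (min x α)) z₁ z₂ ≤ bregmanD φ φ' z₁ z₂ := by
  rw [tilde_eq]
  rcases le_or_gt z₂ α with h2 | h2
  · rw [min_eq_left h2]
    rcases le_or_gt z₁ α with h1 | h1
    · rw [min_eq_left h1]; simp
    · rw [min_eq_right h1.le]
      have ht := bregman_threept φ φ' z₁ z₂ α
      have := bregman_nonneg hgrad h₁ hα
      linarith
  · rw [min_eq_right h2.le]
    rcases le_or_gt z₁ α with h1 | h1
    · rw [min_eq_left h1]
      have := bregman_mono_right hgrad hmono h₁ h1 h2.le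
      linarith
    · rw [min_eq_right h1.le]
      have h0 : bregmanD φ φ' α α = 0 := by unfold bregmanD; ring
      have := bregman_nonneg hgrad h₁ h₂
      rw [h0]; simp; linarith

lemma tilde_mono (hgrad : ∀ a ∈ Ici (0:ℝ), ∀ b ∈ Ici (0:ℝ), φ a + φ' a * (b - a) ≤ φ b)
    (hmono : MonotoneOn φ' (Ici (0:ℝ))) {α β z₁ z₂ : ℝ}
    (hα : 0 ≤ α) (hαβ : α ≤ β) (h₁ : 0 ≤ z₁) (h₂ : 0 ≤ z₂) :
    bregmanD (phiTilde φ φ' α) (fun x => φ' (min x α)) z₁ z₂ ≤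
      bregmanD (phiTilde φ φ' β) (fun x => φ' (min x β)) z₁ z₂ := by
  have hβ : (0:ℝ) ≤ β := le_trans hα hαβ
  rw [tilde_eq, tilde_eq]
  rcases le_or_gt z₂ α with h2a | h2a
  · have h2b : z₂ ≤ β := le_trans h2a hαβ
    rw [min_eq_left h2a, min_eq_left h2b]
    rcases le_or_gt z₁ α with h1a | h1a
    · rw [min_eq_left h1a, min_eq_left (le_trans h1a hαβ)]; simp
    · rw [min_eq_right h1a.le]
      rcases le_or_gt z₁ β with h1b | h1b
      · rw [min_eq_left h1b]
        have ht := bregman_threept φ φ' z₁ z₂ α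
        have := bregman_nonneg hgrad h₁ hα
        linarith
      · rw [min_eq_right h1b.le]
        have t1 := bregman_threept φ φ' z₁ z₂ α
        have t2 := bregman_threept φ φ' z₁ z₂ β
        have := bregman_anti_right hgrad hmono hα hαβ h1b.le
        linarith
  · rw [min_eq_right h2a.le]
    rcases le_or_gt z₁ α with h1a | h1a
    · rw [min_eq_left h1a]
      rcases le_or_gt z₂ β with h2b | h2b
      · rw [min_eq_left h2b, min_eq_left (le_trans h1a hαβ)]
        have := bregman_mono_right hgrad hmono h₁ h1a h2a.le
        simp only [sub_self, mul_zero, add_zero]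
        have h4 : φ' β - φ' z₂ ≥ 0 := by
          have := hmono h₂ hβ h2b; linarith
        have := bregman_mono_right hgrad hmono h₁ h1a h2a.le
        nlinarith [bregman_mono_right hgrad hmono h₁ h1a h2a.le]
      · rw [min_eq_right h2b.le, min_eq_left (le_trans h1a hαβ)]
        have := bregman_mono_right hgrad hmono h₁ h1a hαβ
        simp only [sub_self, mul_zero, add_zero]
        linarith
    · rw [min_eq_right h1a.le]
      have h0 : bregmanD φ φ' α α = 0 := by unfold bregmanD; ring
      have m1 : (0:ℝ) ≤ min z₁ β := le_min h₁ hβ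
      have m2 : (0:ℝ) ≤ min z₂ β := le_min h₂ hβ
      have hB := bregman_nonneg hgrad m1 m2
      have h5 : 0 ≤ (φ' β - φ' (min z₂ β)) * (z₁ - min z₁ β) :=
        mul_nonneg (by have := hmono m2 hβ (min_le_right z₂ β); linarith)
          (by have := min_le_left z₁ β; linarith)
      rw [h0]; simp; linarith

/-- agreement with the `max·0`-composed generators on nonnegative data -/
lemma tilde_congr (φ φ' : ℝ → ℝ) {α z₁ z₂ : ℝ} (hα : 0 ≤ α) (h₁ : 0 ≤ z₁) (h₂ : 0 ≤ z₂) :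
    bregmanD (phiTilde (fun x => φ (max x 0)) (fun x => φ' (max x 0)) α)
      (fun x => φ' (max (min x α) 0)) z₁ z₂ =
    bregmanD (phiTilde φ φ' α) (fun x => φ' (min x α)) z₁ z₂ := by
  simp only [bregmanD, phiTilde]
  rw [max_eq_left hα, max_eq_left h₁, max_eq_left h₂, max_eq_left (le_min h₂ hα)]

end Aux

open Set Filter MeasureTheory

/-- For a convex, continuously differentiable generator `φ : [0,∞) → ℝ` and measurable
`F̆₁, F̆₂ : (0,1) → [0,∞)` with finite Bregman–Wasserstein divergence, the threshold
Bregman–Wasserstein divergence `𝔅_{φ̃}(F̆₁, F̆₂; α) = ∫₀¹ B_{φ̃}(F̆₁(t), F̆₂(t); α) dt`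
is non-decreasing in `α` on `(0,∞)`, tends to `0` as `α → 0⁺`, and tends to
`∫₀¹ B_φ(F̆₁(t), F̆₂(t)) dt` as `α → ∞`. -/
theorem bw_phiTilde_monotone_and_limits
    (φ φ' : ℝ → ℝ) (hconv : ConvexOn ℝ (Set.Ici 0) φ)
    (hderiv : ∀ x ∈ Set.Ici (0:ℝ), HasDerivWithinAt φ (φ' x) (Set.Ici 0) x)
    (hcont : ContinuousOn φ' (Set.Ici 0))
    (F₁ F₂ : ℝ → ℝ) (hF₁ : Measurable F₁) (hF₂ : Measurable F₂)
    (hF₁0 : ∀ t ∈ Set.Ioo (0:ℝ) 1, 0 ≤ F₁ t) (hF₂0 : ∀ t ∈ Set.Ioo (0:ℝ) 1, 0 ≤ F₂ t)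
    (hfin : (∫⁻ t in Set.Ioo (0:ℝ) 1,
        ENNReal.ofReal (bregmanD φ φ' (F₁ t) (F₂ t))) ≠ ⊤) :
    MonotoneOn (fun α => ∫⁻ t in Set.Ioo (0:ℝ) 1,
        ENNReal.ofReal (bregmanD (phiTilde φ φ' α) (fun x => φ' (min x α)) (F₁ t) (F₂ t)))
      (Set.Ioi 0) ∧
    Filter.Tendsto (fun α => ∫⁻ t in Set.Ioo (0:ℝ) 1,
        ENNReal.ofReal (bregmanD (phiTilde φ φ' α) (fun x => φ' (min x α)) (F₁ t) (F₂ t)))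
      (nhdsWithin 0 (Set.Ioi 0)) (nhds 0) ∧
    Filter.Tendsto (fun α => ∫⁻ t in Set.Ioo (0:ℝ) 1,
        ENNReal.ofReal (bregmanD (phiTilde φ φ' α) (fun x => φ' (min x α)) (F₁ t) (F₂ t)))
      Filter.atTop
      (nhds (∫⁻ t in Set.Ioo (0:ℝ) 1, ENNReal.ofReal (bregmanD φ φ' (F₁ t) (F₂ t)))) := by
  -- gradient inequality
  have hgrad : ∀ a ∈ Ici (0:ℝ), ∀ b ∈ Ici (0:ℝ), φ a + φ' a * (b - a) ≤ φ b := by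
    intro a ha b hb
    rcases lt_trichotomy a b with h | h | h
    · have hs := hconv.le_slope_of_hasDerivWithinAt ha hb h (hderiv a ha)
      rw [slope_def_field] at hs
      have hba : 0 < b - a := sub_pos.2 h
      rw [le_div_iff₀ hba] at hs
      linarith
    · subst h; simp
    · have hs := hconv.slope_le_of_hasDerivWithinAt hb ha h (hderiv a ha)
      rw [slope_def_field] at hs
      have hba : 0 < a - b := sub_pos.2 h
      rw [div_le_iff₀ hba] at hs
      linarith
  have hmono : MonotoneOn φ' (Ici (0:ℝ)) := by
    intro a ha b hb hab
    rcases eq_or_lt_of_le hab with h | h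
    · subst h; exact le_rfl
    · have h1 := hgrad a ha b hb
      have h2 := hgrad b hb a ha
      nlinarith [sub_pos.2 h]
  have hφcont : ContinuousOn φ (Ici (0:ℝ)) := fun x hx => (hderiv x hx).continuousWithinAt
  -- continuous measurable versions
  set φc : ℝ → ℝ := fun x => φ (max x 0) with hφc_def
  set φc' : ℝ → ℝ := fun x => φ' (max x 0) with hφc'_def
  have hφc : Continuous φc :=
    hφcont.comp_continuous (continuous_id.max continuous_const) fun x => Set.mem_Ici.2 (le_max_right _ _)
  have hφc' : Continuous φc' :=
    hcont.comp_continuous (continuous_id.max continuous_const) fun x => Set.mem_Ici.2 (le_max_right _ _)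
  set G₁ : ℝ → ℝ := fun t => max (F₁ t) 0 with hG₁_def
  set G₂ : ℝ → ℝ := fun t => max (F₂ t) 0 with hG₂_def
  have hG₁ : Measurable G₁ := hF₁.max measurable_const
  have hG₂ : Measurable G₂ := hF₂.max measurable_const
  -- measurable family
  set M : ℝ → ℝ → ENNReal := fun α t =>
    ENNReal.ofReal (bregmanD (phiTilde φc φc' α) (fun x => φc' (min x α)) (G₁ t) (G₂ t))
    with hM_def
  have hMmeas : ∀ α, Measurable (M α) := by
    intro α
    have hψ : Measurable (phiTilde φc φc' α) := by
      unfold phiTilde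
      exact Measurable.ite (measurableSet_le measurable_id measurable_const)
        hφc.measurable
        (measurable_const.add (measurable_const.mul (measurable_id.sub measurable_const)))
    have hd : Measurable (fun x => φc' (min x α)) :=
      hφc'.measurable.comp (measurable_id.min measurable_const)
    simp only [hM_def, bregmanD]
    exact ENNReal.measurable_ofReal.comp
      (((hψ.comp hG₁).sub (hψ.comp hG₂)).sub ((hd.comp hG₂).mul ((hG₁.sub hG₂))))
  -- agreement on (0,1) for α ≥ 0
  have hMeq : ∀ α, 0 ≤ α → ∀ t ∈ Ioo (0:ℝ) 1,
      M α t = ENNReal.ofReal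
        (bregmanD (phiTilde φ φ' α) (fun x => φ' (min x α)) (F₁ t) (F₂ t)) := by
    intro α hα t ht
    have h1 := hF₁0 t ht
    have h2 := hF₂0 t ht
    have e1 : G₁ t = F₁ t := max_eq_left h1
    have e2 : G₂ t = F₂ t := max_eq_left h2
    simp only [hM_def, e1, e2]
    congr 1
    exact tilde_congr φ φ' hα h1 h2
  have hInt : ∀ α ∈ Ioi (0:ℝ),
      (∫⁻ t in Ioo (0:ℝ) 1, ENNReal.ofReal
        (bregmanD (phiTilde φ φ' α) (fun x => φ' (min x α)) (F₁ t) (F₂ t)))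
        = ∫⁻ t in Ioo (0:ℝ) 1, M α t := by
    intro α hα
    refine lintegral_congr_ae ?_
    filter_upwards [ae_restrict_mem measurableSet_Ioo] with t ht
    exact (hMeq α (le_of_lt hα) t ht).symm
  -- bound on (0,1) for α ≥ 0
  have hbound : ∀ α, 0 ≤ α → ∀ t ∈ Ioo (0:ℝ) 1,
      M α t ≤ ENNReal.ofReal (bregmanD φ φ' (F₁ t) (F₂ t)) := by
    intro α hα t ht
    rw [hMeq α hα t ht]
    exact ENNReal.ofReal_le_ofReal
      (tilde_le_top hgrad hmono hα (hF₁0 t ht) (hF₂0 t ht))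
  refine ⟨?_, ?_, ?_⟩
  · -- monotonicity
    intro α hα β hβ hab
    refine lintegral_mono_ae ?_
    filter_upwards [ae_restrict_mem measurableSet_Ioo] with t ht
    exact ENNReal.ofReal_le_ofReal
      (tilde_mono hgrad hmono (le_of_lt hα) hab (hF₁0 t ht) (hF₂0 t ht))
  · -- limit at 0⁺
    have hcongr : ∀ᶠ α in nhdsWithin (0:ℝ) (Ioi 0),
        (∫⁻ t in Ioo (0:ℝ) 1, ENNReal.ofReal
          (bregmanD (phiTilde φ φ' α) (fun x => φ' (min x α)) (F₁ t) (F₂ t)))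
          = ∫⁻ t in Ioo (0:ℝ) 1, M α t := by
      filter_upwards [self_mem_nhdsWithin] with α hα using hInt α hα
    rw [Filter.tendsto_congr' hcongr]
    have h0 : (0 : ENNReal) = ∫⁻ _t in Ioo (0:ℝ) 1, (0 : ENNReal) := by simp
    rw [h0]
    refine tendsto_lintegral_filter_of_dominated_convergence
      (fun t => ENNReal.ofReal (bregmanD φ φ' (F₁ t) (F₂ t)))
      (Filter.Eventually.of_forall hMmeas) ?_ hfin ?_
    · filter_upwards [self_mem_nhdsWithin] with α hα
      filter_upwards [ae_restrict_mem measurableSet_Ioo] with t ht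
      exact hbound α (le_of_lt hα) t ht
    · filter_upwards [ae_restrict_mem measurableSet_Ioo] with t ht
      -- pointwise tendsto to 0
      have h₁ : (0:ℝ) ≤ G₁ t := le_max_right _ _
      have h₂ : (0:ℝ) ≤ G₂ t := le_max_right _ _
      set z₁ := G₁ t
      set z₂ := G₂ t
      have hφ0 : Tendsto φc (nhdsWithin 0 (Ioi 0)) (nhds (φc 0)) :=
        (hφc.tendsto 0).mono_left nhdsWithin_le_nhds
      have hφ'0 : Tendsto φc' (nhdsWithin 0 (Ioi 0)) (nhds (φc' 0)) :=
        (hφc'.tendsto 0).mono_left nhdsWithin_le_nhds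
      have hid : Tendsto (fun α : ℝ => α) (nhdsWithin 0 (Ioi 0)) (nhds 0) :=
        tendsto_id.mono_left nhdsWithin_le_nhds
      have ht1 : ∀ z : ℝ, 0 ≤ z → Tendsto (fun α => phiTilde φc φc' α z)
          (nhdsWithin 0 (Ioi 0)) (nhds (φc 0 + φc' 0 * z)) := by
        intro z hz
        rcases eq_or_lt_of_le hz with h | h
        · have : ∀ᶠ α in nhdsWithin (0:ℝ) (Ioi 0), phiTilde φc φc' α z = φc 0 := by
            filter_upwards [self_mem_nhdsWithin] with α hα
            rw [phiTilde, if_pos (by rw [← h]; exact le_of_lt hα), ← h]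
          rw [Filter.tendsto_congr' this, ← h]
          simpa using tendsto_const_nhds
        · have hev : ∀ᶠ α in nhdsWithin (0:ℝ) (Ioi 0),
              phiTilde φc φc' α z = φc α + φc' α * (z - α) := by
            filter_upwards [eventually_nhdsWithin_of_eventually_nhds (eventually_lt_nhds h)]
              with α hα
            rw [phiTilde, if_neg (not_le.2 hα)]
          rw [Filter.tendsto_congr' hev]
          have hz' : Tendsto (fun α : ℝ => φc α + φc' α * (z - α))
              (nhdsWithin 0 (Ioi 0)) (nhds (φc 0 + φc' 0 * (z - 0))) :=
            hφ0.add (hφ'0.mul (tendsto_const_nhds.sub hid))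
          simpa using hz'
      have ht3 : Tendsto (fun α => φc' (min z₂ α)) (nhdsWithin 0 (Ioi 0)) (nhds (φc' 0)) := by
        rcases eq_or_lt_of_le h₂ with h | h
        · have : ∀ᶠ α in nhdsWithin (0:ℝ) (Ioi 0), φc' (min z₂ α) = φc' 0 := by
            filter_upwards [self_mem_nhdsWithin] with α hα
            rw [min_eq_left (by rw [← h]; exact le_of_lt hα), ← h]
          rw [Filter.tendsto_congr' this]
          exact tendsto_const_nhds
        · have hev : ∀ᶠ α in nhdsWithin (0:ℝ) (Ioi 0), φc' (min z₂ α) = φc' α := by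
            filter_upwards [eventually_nhdsWithin_of_eventually_nhds (eventually_lt_nhds h)]
              with α hα
            rw [min_eq_right (le_of_lt hα)]
          rw [Filter.tendsto_congr' hev]
          exact hφ'0
      have hreal : Tendsto (fun α =>
          bregmanD (phiTilde φc φc' α) (fun x => φc' (min x α)) z₁ z₂)
          (nhdsWithin 0 (Ioi 0)) (nhds 0) := by
        have h4 : Tendsto (fun α =>
            phiTilde φc φc' α z₁ - phiTilde φc φc' α z₂ - φc' (min z₂ α) * (z₁ - z₂))
            (nhdsWithin 0 (Ioi 0))
            (nhds ((φc 0 + φc' 0 * z₁) - (φc 0 + φc' 0 * z₂) - φc' 0 * (z₁ - z₂))) :=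
          ((ht1 z₁ h₁).sub (ht1 z₂ h₂)).sub (ht3.mul tendsto_const_nhds)
        have hval : (φc 0 + φc' 0 * z₁) - (φc 0 + φc' 0 * z₂) - φc' 0 * (z₁ - z₂) = 0 := by
          ring
        rw [hval] at h4
        simpa only [bregmanD] using h4
      have := (ENNReal.continuous_ofReal.tendsto 0).comp hreal
      rw [ENNReal.ofReal_zero] at this
      exact this
  · -- limit at ∞
    have hcongr : ∀ᶠ α in (Filter.atTop : Filter ℝ),
        (∫⁻ t in Ioo (0:ℝ) 1, ENNReal.ofReal
          (bregmanD (phiTilde φ φ' α) (fun x => φ' (min x α)) (F₁ t) (F₂ t)))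
          = ∫⁻ t in Ioo (0:ℝ) 1, M α t := by
      filter_upwards [eventually_gt_atTop (0:ℝ)] with α hα using hInt α hα
    rw [Filter.tendsto_congr' hcongr]
    refine tendsto_lintegral_filter_of_dominated_convergence
      (fun t => ENNReal.ofReal (bregmanD φ φ' (F₁ t) (F₂ t)))
      (Filter.Eventually.of_forall hMmeas) ?_ hfin ?_
    · filter_upwards [eventually_ge_atTop (0:ℝ)] with α hα
      filter_upwards [ae_restrict_mem measurableSet_Ioo] with t ht
      exact hbound α hα t ht
    · filter_upwards [ae_restrict_mem measurableSet_Ioo] with t ht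
      have h1 := hF₁0 t ht
      have h2 := hF₂0 t ht
      have e1 : G₁ t = F₁ t := max_eq_left h1
      have e2 : G₂ t = F₂ t := max_eq_left h2
      have hev : ∀ᶠ α in (Filter.atTop : Filter ℝ),
          M α t = ENNReal.ofReal (bregmanD φ φ' (F₁ t) (F₂ t)) := by
        filter_upwards [eventually_ge_atTop (max (F₁ t) (F₂ t))] with α hα
        have ha1 : F₁ t ≤ α := le_trans (le_max_left _ _) hα
        have ha2 : F₂ t ≤ α := le_trans (le_max_right _ _) hα
        have : bregmanD (phiTilde φc φc' α) (fun x => φc' (min x α)) (G₁ t) (G₂ t)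
            = bregmanD φ φ' (F₁ t) (F₂ t) := by
          rw [e1, e2]
          simp only [bregmanD, phiTilde, hφc_def, hφc'_def]
          rw [if_pos ha1, if_pos ha2, min_eq_left ha2, max_eq_left h1, max_eq_left h2]
        simp only [hM_def, this]
      exact Filter.Tendsto.congr' (hev.mono fun α h => h.symm) tendsto_const_nhds
end
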